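/- Let A be a Banach algebra and D : A → A* a bounded surjective derivation. Then A has the I-w*w property (i.e., for each a'' ∈ A**, the map b'' ↦ a''b'' on A** is weak-star to weak continuous) if and only if D''(A**)·A** ⊆ A*. In particular, if D''(A**)·A** ⊆ A*, then A is Arens regular. -/

import Mathlib

set_option maxHeartbeats 1000000

open Filter Topology ContinuousLinearMap NormedSpace

noncomputable section ArensSetup

/-- `NormedSpace.Dual` as it stood in the older Mathlib (removed since; `StrongDual` replaces it). -/
abbrev NormedSpace.Dual (𝕜 : Type*) [NontriviallyNormedField 𝕜] (E : Type*) [SeminormedAddCommGroup E]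
    [NormedSpace 𝕜 E] : Type _ :=
  E →L[𝕜] 𝕜

/-- The adjoint (transpose) of a continuous linear map between normed spaces. -/
def adjCLM {E F : Type*} [SeminormedAddCommGroup E] [NormedSpace ℝ E]
    [SeminormedAddCommGroup F] [NormedSpace ℝ F] (T : E →L[ℝ] F) :
    Dual ℝ F →L[ℝ] Dual ℝ E :=
  (ContinuousLinearMap.compL ℝ E F ℝ).flip T

@[simp] theorem adjCLM_apply {E F : Type*} [SeminormedAddCommGroup E] [NormedSpace ℝ E]
    [SeminormedAddCommGroup F] [NormedSpace ℝ F] (T : E →L[ℝ] F) (g : Dual ℝ F) (x : E) :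
    adjCLM T g x = g (T x) := rfl

/-- One-step Arens-type adjoint of a bounded bilinear map:
`ext1 β g' e = g' ∘ (β e)`. -/
def ext1 {E F G : Type*} [SeminormedAddCommGroup E] [NormedSpace ℝ E]
    [SeminormedAddCommGroup F] [NormedSpace ℝ F] [SeminormedAddCommGroup G] [NormedSpace ℝ G]
    (β : E →L[ℝ] F →L[ℝ] G) : Dual ℝ G →L[ℝ] E →L[ℝ] Dual ℝ F :=
  ((ContinuousLinearMap.compL ℝ F G ℝ).flip.comp β).flip

@[simp] theorem ext1_apply {E F G : Type*} [SeminormedAddCommGroup E] [NormedSpace ℝ E]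
    [SeminormedAddCommGroup F] [NormedSpace ℝ F] [SeminormedAddCommGroup G] [NormedSpace ℝ G]
    (β : E →L[ℝ] F →L[ℝ] G) (g' : Dual ℝ G) (e : E) (f : F) :
    ext1 β g' e f = g' (β e f) := rfl

/-- Triple adjoint: the (first) Arens extension of a bounded bilinear map to the
second duals. -/
def ext3 {E F G : Type*} [SeminormedAddCommGroup E] [NormedSpace ℝ E]
    [SeminormedAddCommGroup F] [NormedSpace ℝ F] [SeminormedAddCommGroup G] [NormedSpace ℝ G]
    (β : E →L[ℝ] F →L[ℝ] G) :
    Dual ℝ (Dual ℝ E) →L[ℝ] Dual ℝ (Dual ℝ F) →L[ℝ] Dual ℝ (Dual ℝ G) :=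
  ext1 (ext1 (ext1 β))

variable (A : Type*) [NonUnitalNormedRing A] [NormedSpace ℝ A]
  [SMulCommClass ℝ A A] [IsScalarTower ℝ A A] [CompleteSpace A]

/-- The first (left) Arens product on `A**`: `⟨a''b'', a'⟩ = ⟨a'', b''a'⟩`. -/
def fArens : Dual ℝ (Dual ℝ A) →L[ℝ] Dual ℝ (Dual ℝ A) →L[ℝ] Dual ℝ (Dual ℝ A) :=
  ext3 (ContinuousLinearMap.mul ℝ A)

/-- The second (right) Arens product on `A**`: `⟨a''∘b'', a'⟩ = ⟨b'', a'∘a''⟩`. -/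
def sArens : Dual ℝ (Dual ℝ A) →L[ℝ] Dual ℝ (Dual ℝ A) →L[ℝ] Dual ℝ (Dual ℝ A) :=
  (ext3 (ContinuousLinearMap.mul ℝ A).flip).flip

/-- `A` is Arens regular when the two Arens products on `A**` coincide. -/
def ArensRegular : Prop := fArens A = sArens A

variable {A}

/-- Weak-star to weak continuity for a map from the dual of `E` into `F`. -/
def WStarToWCont {E F : Type*} [SeminormedAddCommGroup E] [NormedSpace ℝ E]
    [SeminormedAddCommGroup F] [NormedSpace ℝ F] (f : Dual ℝ E → F) : Prop :=
  Continuous fun x : WeakDual ℝ E => toWeakSpace ℝ F (f (WeakDual.toStrongDual x))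

variable (A)

/-- The second adjoint `T'' : A** → A**` of `T : A → A`. -/
def secondAdj (T : A →L[ℝ] A) : Dual ℝ (Dual ℝ A) →L[ℝ] Dual ℝ (Dual ℝ A) :=
  adjCLM (adjCLM T)

/-- Left action of `A` on `A*`: `⟨a·a', b⟩ = ⟨a', ba⟩`. -/
def dualLeft : A →L[ℝ] Dual ℝ A →L[ℝ] Dual ℝ A :=
  (ext1 (ContinuousLinearMap.mul ℝ A).flip).flip

/-- Right action of `A` on `A*`: `⟨a'·a, b⟩ = ⟨a', ab⟩`. -/
def dualRight : Dual ℝ A →L[ℝ] A →L[ℝ] Dual ℝ A :=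
  ext1 (ContinuousLinearMap.mul ℝ A)

/-- Left action of `A**` (first Arens product) on `A***`. -/
def dualLeft2 : Dual ℝ (Dual ℝ A) →L[ℝ] Dual ℝ (Dual ℝ (Dual ℝ A)) →L[ℝ]
    Dual ℝ (Dual ℝ (Dual ℝ A)) :=
  (ext1 (fArens A).flip).flip

/-- Right action of `A**` (first Arens product) on `A***`. -/
def dualRight2 : Dual ℝ (Dual ℝ (Dual ℝ A)) →L[ℝ] Dual ℝ (Dual ℝ A) →L[ℝ]
    Dual ℝ (Dual ℝ (Dual ℝ A)) :=
  ext1 (fArens A)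

end ArensSetup

section BimoduleSetup

set_option maxHeartbeats 1000000

open Filter Topology ContinuousLinearMap NormedSpace

/-- A Banach `A`-bimodule: bounded bilinear left and right actions satisfying the
usual compatibility axioms. -/
structure BanachBimodule (A X : Type*) [NonUnitalNormedRing A] [NormedSpace ℝ A]
    [SMulCommClass ℝ A A] [IsScalarTower ℝ A A]
    [NormedAddCommGroup X] [NormedSpace ℝ X] [CompleteSpace X] where
  l : A →L[ℝ] X →L[ℝ] X
  r : X →L[ℝ] A →L[ℝ] X
  l_mul : ∀ a b x, l (a * b) x = l a (l b x)
  r_mul : ∀ x a b, r (r x a) b = r x (a * b)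
  l_r : ∀ a x b, l a (r x b) = r (l a x) b

variable {A X : Type*} [NonUnitalNormedRing A] [NormedSpace ℝ A]
  [SMulCommClass ℝ A A] [IsScalarTower ℝ A A] [CompleteSpace A]
  [NormedAddCommGroup X] [NormedSpace ℝ X] [CompleteSpace X]

/-- Left action of `A` on `X*`: `⟨a·f, x⟩ = ⟨f, x·a⟩`. -/
noncomputable def modDualLeft (M : BanachBimodule A X) : A →L[ℝ] Dual ℝ X →L[ℝ] Dual ℝ X :=
  (ext1 M.r.flip).flip

/-- Right action of `A` on `X*`: `⟨f·a, x⟩ = ⟨f, a·x⟩`. -/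
noncomputable def modDualRight (M : BanachBimodule A X) : Dual ℝ X →L[ℝ] A →L[ℝ] Dual ℝ X :=
  ext1 M.l

/-- Left action of `A**` on `X**` (first Arens extension). -/
noncomputable def modL2 (M : BanachBimodule A X) :
    Dual ℝ (Dual ℝ A) →L[ℝ] Dual ℝ (Dual ℝ X) →L[ℝ] Dual ℝ (Dual ℝ X) :=
  ext3 M.l

/-- Right action of `A**` on `X**` (first Arens extension); `modR2 M x'' a'' = x''a''`. -/
noncomputable def modR2 (M : BanachBimodule A X) :
    Dual ℝ (Dual ℝ X) →L[ℝ] Dual ℝ (Dual ℝ A) →L[ℝ] Dual ℝ (Dual ℝ X) :=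
  ext3 M.r

/-- Left action of `A**` on `X***`: `⟨a''·x''', x''⟩ = ⟨x''', x''a''⟩`. -/
noncomputable def modL3 (M : BanachBimodule A X) :
    Dual ℝ (Dual ℝ A) →L[ℝ] Dual ℝ (Dual ℝ (Dual ℝ X)) →L[ℝ] Dual ℝ (Dual ℝ (Dual ℝ X)) :=
  (ext1 (modR2 M).flip).flip

/-- Right action of `A**` on `X***`: `⟨x'''·a'', x''⟩ = ⟨x''', a''x''⟩`. -/
noncomputable def modR3 (M : BanachBimodule A X) :
    Dual ℝ (Dual ℝ (Dual ℝ X)) →L[ℝ] Dual ℝ (Dual ℝ A) →L[ℝ] Dual ℝ (Dual ℝ (Dual ℝ X)) :=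
  ext1 (modL2 M)

end BimoduleSetup

section DerivationSetup

variable {B Y : Type*} [SeminormedAddCommGroup B] [NormedSpace ℝ B]
  [SeminormedAddCommGroup Y] [NormedSpace ℝ Y]

/-- `D` is a derivation with respect to the multiplication `m` and the module
actions `l`, `r`. -/
def IsDeriv (m : B →L[ℝ] B →L[ℝ] B) (l : B →L[ℝ] Y →L[ℝ] Y)
    (r : Y →L[ℝ] B →L[ℝ] Y) (D : B →L[ℝ] Y) : Prop :=
  ∀ a b, D (m a b) = l a (D b) + r (D a) b

/-- `D` is an inner derivation: `D a = a·y − y·a` for some fixed `y`. -/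
def IsInner (l : B →L[ℝ] Y →L[ℝ] Y) (r : Y →L[ℝ] B →L[ℝ] Y) (D : B →L[ℝ] Y) : Prop :=
  ∃ y, ∀ a, D a = l a y - r y a

/-- `D` is a `T-S`-derivation: `D(ab) = T(a)·D(b) + D(a)·S(b)`. -/
def IsTSDeriv (m : B →L[ℝ] B →L[ℝ] B) (l : B →L[ℝ] Y →L[ℝ] Y)
    (r : Y →L[ℝ] B →L[ℝ] Y) (T S : B →L[ℝ] B) (D : B →L[ℝ] Y) : Prop :=
  ∀ a b, D (m a b) = l (T a) (D b) + r (D a) (S b)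

/-- `D` is an inner `T-S`-derivation: `D a = T(a)·y − y·S(a)` for some fixed `y`. -/
def IsTSInner (l : B →L[ℝ] Y →L[ℝ] Y) (r : Y →L[ℝ] B →L[ℝ] Y)
    (T S : B →L[ℝ] B) (D : B →L[ℝ] Y) : Prop :=
  ∃ y, ∀ a, D a = l (T a) y - r y (S a)

end DerivationSetup



section AuxLemmas
set_option maxHeartbeats 1000000
open Filter Topology ContinuousLinearMap NormedSpace

/-- A weak-star continuous linear functional on a dual space is evaluation at a point
of the predual. -/
theorem weakdual_functional_exists' {E : Type*} [SeminormedAddCommGroup E] [NormedSpace ℝ E]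
    (Φ : WeakDual ℝ E →ₗ[ℝ] ℝ) (hΦ : Continuous Φ) :
    ∃ y : E, ∀ x : WeakDual ℝ E, Φ x = x y := by
  classical
  set B := topDualPairing ℝ E with hB
  have hp := B.weakBilin_withSeminorms
  let q : Seminorm ℝ (WeakBilin B) := (normSeminorm ℝ ℝ).comp Φ
  have hq : Continuous q := by
    have : Continuous fun x : WeakBilin B => ‖Φ x‖ := continuous_norm.comp hΦ
    exact this
  obtain ⟨s, C, hC0, hle⟩ := Seminorm.bound_of_continuous hp q hq
  let L : s → (WeakBilin B →ₗ[ℝ] ℝ) := fun y => B.flip (y : E)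
  have hker : ⨅ i, LinearMap.ker (L i) ≤ LinearMap.ker Φ := by
    intro x hx
    simp only [Submodule.mem_iInf, LinearMap.mem_ker] at hx
    have hsup : (s.sup B.toSeminormFamily) x ≤ 0 := by
      refine Seminorm.finset_sup_apply_le le_rfl fun i hi => ?_
      have hBx : B x i = 0 := hx ⟨i, hi⟩
      show ‖B x i‖ ≤ 0
      simp [hBx]
    have hqx : q x ≤ 0 := by
      calc q x ≤ (C • s.sup B.toSeminormFamily) x := hle x
        _ = (C : ℝ) * (s.sup B.toSeminormFamily) x := rfl
        _ ≤ 0 := mul_nonpos_of_nonneg_of_nonpos (by positivity) hsup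
    have : ‖Φ x‖ ≤ 0 := hqx
    exact norm_le_zero_iff.mp this
  have hmem : Φ ∈ Submodule.span ℝ (Set.range L) := mem_span_of_iInf_ker_le_ker hker
  have hrange : Submodule.span ℝ (Set.range L) ≤ LinearMap.range (B.flip) := by
    refine Submodule.span_le.mpr ?_
    rintro _ ⟨i, rfl⟩
    exact ⟨(i : E), rfl⟩
  obtain ⟨y, hy⟩ := hrange hmem
  exact ⟨y, fun x => by rw [← hy]; rfl⟩

/-- Goldstine-type density: the canonical image of `E` is weak-star dense in `E**`. -/
theorem dense_inclusion_weakstar' (E : Type*) [NormedAddCommGroup E] [NormedSpace ℝ E] :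
    @Dense (WeakDual ℝ (Dual ℝ E)) _
      (Set.range fun a : E => (inclusionInDoubleDual ℝ E a : WeakDual ℝ (Dual ℝ E))) := by
  classical
  haveI : LocallyConvexSpace ℝ (WeakDual ℝ (Dual ℝ E)) := WeakBilin.locallyConvexSpace
  set S : Set (WeakDual ℝ (Dual ℝ E)) :=
    Set.range fun a : E => (inclusionInDoubleDual ℝ E a : WeakDual ℝ (Dual ℝ E)) with hS
  intro x
  by_contra hx
  let j : E →ₗ[ℝ] WeakDual ℝ (Dual ℝ E) :=
    { toFun := fun a => inclusionInDoubleDual ℝ E a,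
      map_add' := fun a b => map_add (inclusionInDoubleDual ℝ E) a b,
      map_smul' := fun c a => map_smul (inclusionInDoubleDual ℝ E) c a }
  have hconv : Convex ℝ S := by
    have : S = (LinearMap.range j : Set (WeakDual ℝ (Dual ℝ E))) := by
      ext z; constructor
      · rintro ⟨a, rfl⟩; exact ⟨a, rfl⟩
      · rintro ⟨a, rfl⟩; exact ⟨a, rfl⟩
    rw [this]
    exact (LinearMap.range j).convex
  obtain ⟨f, u, hfu, hux⟩ := geometric_hahn_banach_closed_point
    (hconv.closure) isClosed_closure hx
  have hu0 : 0 < u := by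
    have h0 : (0 : WeakDual ℝ (Dual ℝ E)) ∈ closure S :=
      subset_closure ⟨0, by simp [hS]; rfl⟩
    simpa using hfu 0 h0
  have hf0 : ∀ a : E, f (j a) = 0 := by
    intro a
    by_contra hne
    set t : ℝ := (u + 1) / f (j a) with ht
    have hmem : (t • j a) ∈ closure S := by
      refine subset_closure ⟨t • a, ?_⟩
      show (inclusionInDoubleDual ℝ E) (t • a) = t • j a
      rw [map_smul]; rfl
    have h2 := hfu _ hmem
    rw [map_smul] at h2
    simp only [smul_eq_mul, ht] at h2
    rw [div_mul_cancel₀ _ hne] at h2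
    linarith
  obtain ⟨y, hy⟩ := weakdual_functional_exists' (f.toLinearMap) f.continuous
  have hy0 : y = 0 := by
    ext1 a
    have := hf0 a
    rw [show f (j a) = (f.toLinearMap) (j a) from rfl, hy (j a)] at this
    exact this
  have : f x = 0 := by
    rw [show f x = (f.toLinearMap) x from rfl, hy x, hy0]; simp
  linarith

/-- If `T` is a surjective bounded operator, so is its double transpose. -/
theorem adj2_surjective {X Y : Type*} [NormedAddCommGroup X] [NormedSpace ℝ X]
    [CompleteSpace X] [NormedAddCommGroup Y] [NormedSpace ℝ Y] [CompleteSpace Y]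
    (T : X →L[ℝ] Y) (hsurj : Function.Surjective T) :
    Function.Surjective (adjCLM (adjCLM T)) := by
  obtain ⟨C, hC, hpre⟩ := T.exists_preimage_norm_le hsurj
  set T' : Dual ℝ Y →L[ℝ] Dual ℝ X := adjCLM T with hT'
  have hlow : ∀ g : Dual ℝ Y, ‖g‖ ≤ C * ‖T' g‖ := by
    intro g
    refine g.opNorm_le_bound (by positivity) fun y => ?_
    obtain ⟨x, hx, hnx⟩ := hpre y
    calc ‖g y‖ = ‖(T' g) x‖ := by rw [adjCLM_apply, hx]
      _ ≤ ‖T' g‖ * ‖x‖ := (T' g).le_opNorm x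
      _ ≤ ‖T' g‖ * (C * ‖y‖) := mul_le_mul_of_nonneg_left hnx (norm_nonneg _)
      _ = C * ‖T' g‖ * ‖y‖ := by ring
  have hinj : Function.Injective T' := by
    intro g₁ g₂ h
    have : ‖g₁ - g₂‖ ≤ C * ‖T' (g₁ - g₂)‖ := hlow _
    rw [map_sub, h, sub_self, norm_zero, mul_zero] at this
    exact sub_eq_zero.mp (norm_le_zero_iff.mp this)
  intro Λ
  let e : Dual ℝ Y ≃ₗ[ℝ] LinearMap.range (T' : Dual ℝ Y →ₗ[ℝ] Dual ℝ X) :=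
    LinearEquiv.ofInjective (T' : Dual ℝ Y →ₗ[ℝ] Dual ℝ X) hinj
  let f₀ : LinearMap.range (T' : Dual ℝ Y →ₗ[ℝ] Dual ℝ X) →ₗ[ℝ] ℝ :=
    Λ.toLinearMap ∘ₗ e.symm.toLinearMap
  have hbound : ∀ z, ‖f₀ z‖ ≤ (‖Λ‖ * C) * ‖z‖ := by
    intro z
    have h1 : ‖f₀ z‖ ≤ ‖Λ‖ * ‖e.symm z‖ := Λ.le_opNorm _
    have h2 : ‖e.symm z‖ ≤ C * ‖(z : Dual ℝ X)‖ := by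
      have h3 : T' (e.symm z) = (z : Dual ℝ X) := by
        have h4 := e.apply_symm_apply z
        calc T' (e.symm z) = ((e (e.symm z) : LinearMap.range _) : Dual ℝ X) := rfl
          _ = (z : Dual ℝ X) := by rw [h4]
      calc ‖e.symm z‖ ≤ C * ‖T' (e.symm z)‖ := hlow _
        _ = C * ‖(z : Dual ℝ X)‖ := by rw [h3]
    calc ‖f₀ z‖ ≤ ‖Λ‖ * ‖e.symm z‖ := h1
      _ ≤ ‖Λ‖ * (C * ‖z‖) := mul_le_mul_of_nonneg_left h2 (norm_nonneg _)
      _ = (‖Λ‖ * C) * ‖z‖ := by ring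
  let f₀c : LinearMap.range (T' : Dual ℝ Y →ₗ[ℝ] Dual ℝ X) →L[ℝ] ℝ :=
    f₀.mkContinuous (‖Λ‖ * C) hbound
  obtain ⟨g, hg, -⟩ := exists_extension_norm_eq _ f₀c
  refine ⟨g, ?_⟩
  ext ξ
  have hmem : T' ξ ∈ LinearMap.range (T' : Dual ℝ Y →ₗ[ℝ] Dual ℝ X) := ⟨ξ, rfl⟩
  have h1 : adjCLM (adjCLM T) g ξ = g (T' ξ) := rfl
  rw [h1, hg ⟨T' ξ, hmem⟩]
  show f₀ ⟨T' ξ, hmem⟩ = Λ ξ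
  have h5 : e.symm ⟨T' ξ, hmem⟩ = ξ := by
    have h6 : e ξ = ⟨T' ξ, hmem⟩ := by
      apply Subtype.ext; rfl
    rw [← h6, e.symm_apply_apply]
  simp only [f₀, LinearMap.comp_apply]
  rw [show (e.symm.toLinearMap ⟨T' ξ, hmem⟩ : Dual ℝ Y) = e.symm ⟨T' ξ, hmem⟩ from rfl, h5]
  rfl

end AuxLemmas

section Statements
set_option maxHeartbeats 1000000
open Filter Topology ContinuousLinearMap NormedSpace

variable {A : Type*} [NonUnitalNormedRing A] [NormedSpace ℝ A]
  [SMulCommClass ℝ A A] [IsScalarTower ℝ A A] [CompleteSpace A]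

/-- For a surjective derivation `D : A → A*`: `A` has the `I-w*w` property iff
`D''(A**)·A** ⊆ A*`; and the latter implies Arens regularity of `A`. -/
theorem Iwsw_iff_secondAdjoint_prod (D : A →L[ℝ] Dual ℝ A)
    (hD : IsDeriv (ContinuousLinearMap.mul ℝ A) (dualLeft A) (dualRight A) D)
    (hsurj : Function.Surjective D) :
    ((∀ a'' : Dual ℝ (Dual ℝ A), WStarToWCont (fun b'' => fArens A a'' b'')) ↔
      (∀ (a'' c'' : Dual ℝ (Dual ℝ A)), ∃ a' : Dual ℝ A, (adjCLM (adjCLM D) a'').comp (fArens A c'') = inclusionInDoubleDual ℝ (Dual ℝ A) a')) ∧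
    ((∀ (a'' c'' : Dual ℝ (Dual ℝ A)), ∃ a' : Dual ℝ A, (adjCLM (adjCLM D) a'').comp (fArens A c'') = inclusionInDoubleDual ℝ (Dual ℝ A) a') → ArensRegular A) := by
  classical
  set F := Dual ℝ (Dual ℝ A) with hF
  -- the two directions of the iff
  have mp : (∀ a'' : Dual ℝ (Dual ℝ A), WStarToWCont (fun b'' => fArens A a'' b'')) →
      (∀ (a'' c'' : Dual ℝ (Dual ℝ A)), ∃ a' : Dual ℝ A,
        (adjCLM (adjCLM D) a'').comp (fArens A c'') = inclusionInDoubleDual ℝ (Dual ℝ A) a') := by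
    intro H a'' c''
    set Φ : F →L[ℝ] ℝ := (adjCLM (adjCLM D) a'').comp (fArens A c'') with hΦdef
    have hcont : Continuous fun x : WeakDual ℝ (Dual ℝ A) => Φ x := by
      have heval : Continuous fun z : WeakSpace ℝ F =>
          (topDualPairing ℝ F).flip z (adjCLM (adjCLM D) a'') :=
        WeakBilin.eval_continuous ((topDualPairing ℝ F).flip) (adjCLM (adjCLM D) a'')
      exact heval.comp (H c'')
    obtain ⟨y, hy⟩ := weakdual_functional_exists' (E := Dual ℝ A) Φ.toLinearMap hcont
    refine ⟨y, ?_⟩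
    ext b''
    exact hy b''
  refine ⟨⟨mp, ?_⟩, ?_⟩
  case refine_1 =>
    intro H a''
    have hsurj2 : Function.Surjective (adjCLM (adjCLM D)) := adj2_surjective D hsurj
    show Continuous fun x : WeakDual ℝ (Dual ℝ A) =>
      toWeakSpace ℝ F (fArens A a'' (WeakDual.toStrongDual x))
    refine WeakBilin.continuous_of_continuous_eval _ fun Λ => ?_
    obtain ⟨a₀'', hΛ⟩ := hsurj2 Λ
    obtain ⟨y, hy⟩ := H a₀'' a''
    have hfun : (fun x : WeakDual ℝ (Dual ℝ A) =>
        (topDualPairing ℝ F).flip (toWeakSpace ℝ F (fArens A a'' (WeakDual.toStrongDual x))) Λ)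
        = fun x : WeakDual ℝ (Dual ℝ A) => topDualPairing ℝ (Dual ℝ A) x y := by
      funext x
      have := ContinuousLinearMap.ext_iff.mp hy (WeakDual.toStrongDual x)
      rw [← hΛ]
      exact this
    rw [hfun]
    exact WeakBilin.eval_continuous (topDualPairing ℝ (Dual ℝ A)) y
  case refine_2 =>
    intro H
    have hIw : ∀ a'' : Dual ℝ (Dual ℝ A), WStarToWCont (fun b'' => fArens A a'' b'') := by
      intro a''
      have hsurj2 : Function.Surjective (adjCLM (adjCLM D)) := adj2_surjective D hsurj
      show Continuous fun x : WeakDual ℝ (Dual ℝ A) =>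
        toWeakSpace ℝ F (fArens A a'' (WeakDual.toStrongDual x))
      refine WeakBilin.continuous_of_continuous_eval _ fun Λ => ?_
      obtain ⟨a₀'', hΛ⟩ := hsurj2 Λ
      obtain ⟨y, hy⟩ := H a₀'' a''
      have hfun : (fun x : WeakDual ℝ (Dual ℝ A) =>
          (topDualPairing ℝ F).flip (toWeakSpace ℝ F (fArens A a'' (WeakDual.toStrongDual x))) Λ)
          = fun x : WeakDual ℝ (Dual ℝ A) => topDualPairing ℝ (Dual ℝ A) x y := by
        funext x
        have := ContinuousLinearMap.ext_iff.mp hy (WeakDual.toStrongDual x)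
        rw [← hΛ]
        exact this
      rw [hfun]
      exact WeakBilin.eval_continuous (topDualPairing ℝ (Dual ℝ A)) y
    -- Arens regularity from the I-w*w property, by weak-star density of A in A**
    show fArens A = sArens A
    ext a'' b'' a'
    let g₁ : WeakDual ℝ (Dual ℝ A) → ℝ := fun x => fArens A a'' (WeakDual.toStrongDual x) a'
    let g₂ : WeakDual ℝ (Dual ℝ A) → ℝ := fun x => sArens A a'' (WeakDual.toStrongDual x) a'
    have hg₁ : Continuous g₁ := by
      have heval : Continuous fun z : WeakSpace ℝ F =>
          (topDualPairing ℝ F).flip z (inclusionInDoubleDual ℝ (Dual ℝ A) a') :=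
        WeakBilin.eval_continuous ((topDualPairing ℝ F).flip) _
      exact heval.comp (hIw a'')
    have hg₂ : Continuous g₂ :=
      WeakBilin.eval_continuous (topDualPairing ℝ (Dual ℝ A))
        (ext1 (ext1 (ContinuousLinearMap.mul ℝ A).flip) a'' a')
    have heqon : Set.EqOn g₁ g₂
        (Set.range fun a : A => (inclusionInDoubleDual ℝ A a : WeakDual ℝ (Dual ℝ A))) := by
      rintro _ ⟨a, rfl⟩
      show fArens A a'' (inclusionInDoubleDual ℝ A a) a'
        = sArens A a'' (inclusionInDoubleDual ℝ A a) a'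
      rfl
    have := Continuous.ext_on (dense_inclusion_weakstar' A) hg₁ hg₂ heqon
    exact congrFun this b''


end Statements
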